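/- arXiv:1704.00997 — 2 statements merged into one kernel-verified Lean document; each statement's English description precedes it below -/
import Mathlib

section
/- The reduction number r_Q(I) equals min{ n ≥ 0 : Kⁿ = K^{n+1} }; consequently S = Kⁿ for all n ≥ r_Q(I). -/
open IsLocalRing Polynomial

set_option maxHeartbeats 1000000
set_option synthInstance.maxHeartbeats 400000

noncomputable section

/-- The (ℕ-valued) length `ℓ_R(M)` of an `R`-module `M`, defined as the Krull dimension of
its lattice of submodules (with junk value `0` if the length is infinite). -/
noncomputable def flen (R M : Type*) [Ring R] [AddCommGroup M] [Module R M] : ℕ :=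
  ((Order.krullDim (Submodule R M)).unbotD 0).toNat

/-- The quotient module `Y/X` for submodules `X ⊆ Y` of a module. -/
noncomputable abbrev quotMod {R M : Type*} [CommRing R] [AddCommGroup M] [Module R M]
    (Y X : Submodule R M) :=
  ↥Y ⧸ X.comap Y.subtype

/-- `colen Y X = ℓ_R(Y/X)`. -/
noncomputable def colen {R M : Type*} [CommRing R] [AddCommGroup M] [Module R M]
    (Y X : Submodule R M) : ℕ :=
  flen R (quotMod Y X)

/-- The fractional ideal `K = I/a = {x/a : x ∈ I}` inside the total quotient ring of `R`. -/
noncomputable def Kfrac (R : Type*) [CommRing R] (I : Ideal R) (a : R) :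
    Submodule R (FractionRing R) :=
  Submodule.span R {z : FractionRing R |
    ∃ x ∈ I, z * algebraMap R (FractionRing R) a = algebraMap R (FractionRing R) x}

/-- The ring `S = R[K]`. -/
noncomputable def Sring (R : Type*) [CommRing R] (I : Ideal R) (a : R) :
    Subalgebra R (FractionRing R) :=
  Algebra.adjoin R (Kfrac R I a : Set (FractionRing R))

/-- `S = R[K]` as an `R`-submodule of the total quotient ring. -/
noncomputable def Smod (R : Type*) [CommRing R] (I : Ideal R) (a : R) :
    Submodule R (FractionRing R) :=
  Subalgebra.toSubmodule (Sring R I a)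

/-- The conductor `𝔠 = R : S`, as a submodule of the total quotient ring. -/
noncomputable def condS (R : Type*) [CommRing R] (I : Ideal R) (a : R) :
    Submodule R (FractionRing R) :=
  (1 : Submodule R (FractionRing R)) / Smod R I a

/-- The conductor `𝔠 = R : S`, as an ideal of `R`. -/
noncomputable def condIdeal (R : Type*) [CommRing R] (I : Ideal R) (a : R) : Ideal R :=
  (condS R I a).comap (Algebra.linearMap R (FractionRing R))

/-- The image of the maximal ideal `m` in the total quotient ring. -/
noncomputable def mSub (R : Type*) [CommRing R] [IsLocalRing R] :
    Submodule R (FractionRing R) :=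
  Submodule.map (Algebra.linearMap R (FractionRing R)) (maximalIdeal R)

/-- A fractional ideal `K` is a canonical module of `R` (the Herzog–Kunz duality
characterization): `K : (K : J) = J` for every finitely generated regular fractional ideal. -/
def IsCanonicalSub (R : Type*) [CommRing R] (K : Submodule R (FractionRing R)) : Prop :=
  ∀ J : Submodule R (FractionRing R), J.FG → (∃ z ∈ J, IsUnit z) → K / (K / J) = J

/-- The setting: `I ≠ R` is a canonical ideal of `R` (i.e. `I ≅ K_R`, expressed via the
Herzog–Kunz duality property of `K = I/a`), containing the parameter ideal `Q = (a)`
(`a` a non-zerodivisor) as a reduction. -/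
structure CanSetting (R : Type*) [CommRing R] (I : Ideal R) (a : R) : Prop where
  ne_top : I ≠ ⊤
  mem : a ∈ I
  nzd : a ∈ nonZeroDivisors R
  red : ∃ n : ℕ, I ^ (n + 1) = Ideal.span {a} * I ^ n
  canonical : IsCanonicalSub R (Kfrac R I a)

/-- `μ_R(M)`: the minimal number of generators `ℓ_R(M/mM)`. -/
noncomputable def muR (R : Type*) [CommRing R] [IsLocalRing R]
    (M : Type*) [AddCommGroup M] [Module R M] : ℕ :=
  flen R (M ⧸ (maximalIdeal R • ⊤ : Submodule R M))

/-- The Sally module `S_Q(I)` of `I` with respect to `Q = (a)` has rank `r`, i.e. the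
eventually constant value of `ℓ_R(I^{n+1}/Q^n I) = ℓ_R([S_Q(I)]_n)` equals `r`. -/
def SallyRankIs (R : Type*) [CommRing R] (I : Ideal R) (a : R) (r : ℕ) : Prop :=
  ∃ N : ℕ, ∀ n ≥ N, colen (I ^ (n + 1)) (Ideal.span {a} ^ n * I) = r

/-- `e0` and `e1` are the Hilbert coefficients of the `m`-primary ideal `I`:
`ℓ_R(R/I^{n+1}) = e0·(n+1) - e1` for all large `n`. -/
def IsHilbCoeffs (R : Type*) [CommRing R] (I : Ideal R) (e0 e1 : ℤ) : Prop :=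
  ∃ N : ℕ, ∀ n ≥ N, (flen R (R ⧸ I ^ (n + 1)) : ℤ) = e0 * (n + 1) - e1

/-- The multiplicity `e(A) = e_m^0(A)` of a one-dimensional local ring equals `e`. -/
def RingMultIs (A : Type*) [CommRing A] [IsLocalRing A] (e : ℕ) : Prop :=
  ∃ c : ℤ, ∃ N : ℕ, ∀ n ≥ N,
    (flen A (A ⧸ maximalIdeal A ^ (n + 1)) : ℤ) = (e : ℤ) * (n + 1) - c

/-- `R` is an almost Gorenstein local ring (for the fixed canonical setting): there is an
exact sequence `0 → R → K_R → C → 0` with `mC = 0`; equivalently `m·K ⊆ R`. -/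
def IsAGLSetting (R : Type*) [CommRing R] [IsLocalRing R] (I : Ideal R) (a : R) : Prop :=
  maximalIdeal R • Kfrac R I a ≤ 1

/-- A one-dimensional Cohen-Macaulay local ring is almost Gorenstein. -/
def IsAGLRing (A : Type*) [CommRing A] [IsLocalRing A] : Prop :=
  ∃ (I : Ideal A) (a : A), CanSetting A I a ∧ maximalIdeal A • Kfrac A I a ≤ 1

/-- A one-dimensional local ring is Gorenstein: a fractional canonical ideal equals `R`. -/
def IsGorLoc (A : Type*) [CommRing A] [IsLocalRing A] : Prop :=
  ∃ (I : Ideal A) (a : A), CanSetting A I a ∧ Kfrac A I a = 1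

/-- A one-dimensional ring is Gorenstein: all localizations at maximal ideals are. -/
def IsGorRing (A : Type*) [CommRing A] : Prop :=
  ∀ P : Ideal A, ∀ hP : P.IsMaximal, by
    haveI := hP.isPrime
    exact IsGorLoc (Localization.AtPrime P)

/-- `R` is a `2`-almost Gorenstein local ring: `K² = K³` and `ℓ_R(K²/K) = 2`. -/
def IsTwoAGLK (R : Type*) [CommRing R] (I : Ideal R) (a : R) : Prop :=
  Kfrac R I a ^ 2 = Kfrac R I a ^ 3 ∧ colen (Kfrac R I a ^ 2) (Kfrac R I a) = 2

/-- A ring is a `2`-almost Gorenstein local ring: the Sally module of a canonical ideal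
with respect to a principal reduction has rank `2`. -/
def IsTwoAGLRing (A : Type*) [CommRing A] : Prop :=
  ∃ (I : Ideal A) (a : A), CanSetting A I a ∧ SallyRankIs A I a 2

end

section Aux

variable {R : Type*} [CommRing R]

local notation "F" => FractionRing R

lemma sss (x y : F) :
    (Submodule.span R {x}) * Submodule.span R {y} = Submodule.span R {x * y} := by
  rw [Submodule.span_mul_span, Set.singleton_mul_singleton]

lemma span_pow (x : F) (n : ℕ) :
    (Submodule.span R {x}) ^ n = Submodule.span R {x ^ n} := by
  induction n with
  | zero => simp [Submodule.one_eq_span]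
  | succ n ih => rw [pow_succ, ih, sss, pow_succ]

lemma map_ideal_mul (I J : Ideal R) :
    Submodule.map (Algebra.linearMap R F) (I * J) =
      Submodule.map (Algebra.linearMap R F) I * Submodule.map (Algebra.linearMap R F) J :=
  Submodule.map_mul I J (Algebra.ofId R F)

lemma map_ideal_pow (I : Ideal R) (n : ℕ) :
    Submodule.map (Algebra.linearMap R F) (I ^ n) =
      (Submodule.map (Algebra.linearMap R F) I) ^ n :=
  Submodule.map_pow I (Algebra.ofId R F) n

lemma Kfrac_eq (I : Ideal R) (a : R) (v : Fˣ) (hv : (v : F) = algebraMap R F a) :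
    Kfrac R I a = Submodule.span R {((v⁻¹ : Fˣ) : F)} *
      Submodule.map (Algebra.linearMap R F) I := by
  apply le_antisymm
  · rw [Kfrac, Submodule.span_le]
    rintro z ⟨x, hx, hz⟩
    rw [SetLike.mem_coe, Submodule.mem_span_singleton_mul]
    refine ⟨algebraMap R F x, Submodule.mem_map_of_mem hx, ?_⟩
    have : ((v⁻¹ : Fˣ) : F) * (z * (v : F)) = z := by
      rw [← mul_assoc, mul_comm ((v⁻¹ : Fˣ) : F) z, mul_assoc]
      simp
    rw [← hz, ← hv, this]
  · rw [Submodule.mul_le]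
    rintro m hm n hn
    rcases Submodule.mem_span_singleton.mp hm with ⟨c, rfl⟩
    rcases hn with ⟨x, hx, rfl⟩
    rw [smul_mul_assoc]
    apply Submodule.smul_mem _ c
    apply Submodule.subset_span
    refine ⟨x, hx, ?_⟩
    rw [← hv, mul_comm ((v⁻¹ : Fˣ) : F), mul_assoc]
    simp

lemma Kfrac_pow (I : Ideal R) (a : R) (v : Fˣ) (hv : (v : F) = algebraMap R F a) (n : ℕ) :
    Kfrac R I a ^ n = Submodule.span R {((v⁻¹ : Fˣ) : F) ^ n} *
      Submodule.map (Algebra.linearMap R F) (I ^ n) := by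
  rw [Kfrac_eq I a v hv, mul_pow, span_pow, map_ideal_pow]

lemma span_unit_cancel (w : Fˣ) (p q : Submodule R F)
    (h : Submodule.span R {(w : F)} * p = Submodule.span R {(w : F)} * q) : p = q := by
  have hcancel : ∀ r : Submodule R F,
      Submodule.span R {((w⁻¹ : Fˣ) : F)} * (Submodule.span R {(w : F)} * r) = r := by
    intro r
    rw [← mul_assoc, sss]
    simp only [Units.inv_mul]
    rw [← Submodule.one_eq_span, one_mul]
  rw [← hcancel p, h, hcancel]

lemma key_iff (I : Ideal R) (a : R) (ha : a ∈ nonZeroDivisors R) (n : ℕ) :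
    Kfrac R I a ^ n = Kfrac R I a ^ (n + 1) ↔ I ^ (n + 1) = Ideal.span {a} * I ^ n := by
  obtain ⟨v, hv⟩ := IsLocalization.map_units F (⟨a, ha⟩ : nonZeroDivisors R)
  have hmapinj : Function.Injective
      (Submodule.map (Algebra.linearMap R F) : Ideal R → Submodule R F) :=
    Submodule.map_injective_of_injective (IsFractionRing.injective R F)
  have e1 : Submodule.span R {(v : F) ^ (n + 1)} * Kfrac R I a ^ n =
      Submodule.map (Algebra.linearMap R F) (Ideal.span {a} * I ^ n) := by
    rw [Kfrac_pow I a v hv, ← mul_assoc, sss, map_ideal_mul]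
    have : (v : F) ^ (n + 1) * ((v⁻¹ : Fˣ) : F) ^ n = (v : F) := by
      rw [pow_succ, mul_comm ((v:F)^n), mul_assoc, ← mul_pow]
      simp
    rw [this]
    congr 1
    rw [Ideal.span, Submodule.map_span]
    simp [hv]
  have e2 : Submodule.span R {(v : F) ^ (n + 1)} * Kfrac R I a ^ (n + 1) =
      Submodule.map (Algebra.linearMap R F) (I ^ (n + 1)) := by
    rw [Kfrac_pow I a v hv, ← mul_assoc, sss, ← mul_pow]
    simp only [Units.mul_inv, one_pow]
    rw [← Submodule.one_eq_span, one_mul]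
  constructor
  · intro h
    apply hmapinj
    rw [← e1, ← e2, h]
  · intro h
    apply span_unit_cancel (v ^ (n + 1))
    rw [Units.val_pow_eq_pow_val, e1, e2, h]

end Aux

section Main

variable {R : Type*} [CommRing R]

local notation "F" => FractionRing R

lemma upward (I : Ideal R) (a : R) (r : ℕ) (hr : I ^ (r + 1) = Ideal.span {a} * I ^ r) :
    ∀ m, r ≤ m → I ^ (m + 1) = Ideal.span {a} * I ^ m := by
  intro m hm
  induction m, hm using Nat.le_induction with
  | base => exact hr
  | succ m hm ih =>
    conv_lhs => rw [pow_succ _ (m + 1), ih]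
    rw [mul_assoc, ← pow_succ]

theorem lemma22_main_aux (I : Ideal R) (a : R) (hmem : a ∈ I) (ha : a ∈ nonZeroDivisors R)
    (hred : ∃ n : ℕ, I ^ (n + 1) = Ideal.span {a} * I ^ n) :
    sInf {n : ℕ | I ^ (n + 1) = Ideal.span {a} * I ^ n} =
      sInf {n : ℕ | Kfrac R I a ^ n = Kfrac R I a ^ (n + 1)} ∧
    ∀ n : ℕ, sInf {n : ℕ | I ^ (n + 1) = Ideal.span {a} * I ^ n} ≤ n →
      Smod R I a = Kfrac R I a ^ n := by
  have hsets : {n : ℕ | I ^ (n + 1) = Ideal.span {a} * I ^ n} =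
      {n : ℕ | Kfrac R I a ^ n = Kfrac R I a ^ (n + 1)} :=
    Set.ext fun n => (key_iff I a ha n).symm
  refine ⟨by rw [hsets], ?_⟩
  set r := sInf {n : ℕ | I ^ (n + 1) = Ideal.span {a} * I ^ n} with hrdef
  have hr : I ^ (r + 1) = Ideal.span {a} * I ^ r := Nat.sInf_mem hred
  have hstab : ∀ m, r ≤ m → Kfrac R I a ^ m = Kfrac R I a ^ (m + 1) :=
    fun m hm => (key_iff I a ha m).mpr (upward I a r hr m hm)
  have h1K : (1 : F) ∈ Kfrac R I a :=
    Submodule.subset_span ⟨a, hmem, by rw [one_mul]⟩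
  have hmono : ∀ i j : ℕ, i ≤ j → Kfrac R I a ^ i ≤ Kfrac R I a ^ j := by
    intro i j hij
    induction j, hij using Nat.le_induction with
    | base => exact le_rfl
    | succ j hj ih =>
      refine le_trans ih ?_
      intro x hx
      rw [pow_succ]
      have := Submodule.mul_mem_mul hx h1K
      rwa [mul_one] at this
  have heq : ∀ n, r ≤ n → Kfrac R I a ^ n = Kfrac R I a ^ r := by
    intro n hn
    induction n, hn using Nat.le_induction with
    | base => rfl
    | succ n hn ih => rw [← hstab n hn, ih]
  intro n hn
  have hone : (1 : F) ∈ Kfrac R I a ^ n := by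
    refine hmono 0 n (Nat.zero_le n) ?_
    rw [pow_zero]
    exact Submodule.one_le.mp le_rfl
  have hmul : ∀ x y : F, x ∈ Kfrac R I a ^ n → y ∈ Kfrac R I a ^ n →
      x * y ∈ Kfrac R I a ^ n := by
    intro x y hx hy
    have h2 : Kfrac R I a ^ n * Kfrac R I a ^ n = Kfrac R I a ^ n := by
      rw [← pow_add, heq (n + n) (le_trans hn (Nat.le_add_right n n)), heq n hn]
    rw [← h2]
    exact Submodule.mul_mem_mul hx hy
  have hKle : Kfrac R I a ≤ Kfrac R I a ^ n := by
    have h1 : Kfrac R I a ^ 1 ≤ Kfrac R I a ^ n := by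
      cases n with
      | zero => exact le_of_eq (hstab 0 hn).symm
      | succ m => exact hmono 1 (m + 1) (Nat.succ_le_succ (Nat.zero_le m))
    rw [pow_one] at h1
    exact h1
  apply le_antisymm
  · intro x hx
    have hT : Sring R I a ≤ (Kfrac R I a ^ n).toSubalgebra hone hmul :=
      Algebra.adjoin_le hKle
    exact hT hx
  · have hpow : ∀ m : ℕ, Kfrac R I a ^ m ≤ Smod R I a := by
      intro m
      induction m with
      | zero =>
        rw [pow_zero]
        exact Submodule.one_le.mpr ((Subalgebra.mem_toSubmodule _).mpr (one_mem _))
      | succ m ih =>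
        rw [pow_succ, Submodule.mul_le]
        intro x hx y hy
        exact (Subalgebra.mem_toSubmodule _).mpr
          (mul_mem ((Subalgebra.mem_toSubmodule _).mp (ih hx))
            (Algebra.subset_adjoin hy))
    exact hpow n

end Main


/-- **Lemma 2.2 (1).** `r_Q(I) = min {n ≥ 0 : Kⁿ = K^{n+1}}`; consequently `S = Kⁿ`
for every `n ≥ r_Q(I)`. -/
theorem reduction_number_eq_and_S_eq_pow (R : Type*) [CommRing R] [IsLocalRing R] [IsNoetherianRing R]
    (hdim : ringKrullDim R = 1)
    (hCM : ∃ x ∈ maximalIdeal R, x ∈ nonZeroDivisors R)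
    (I : Ideal R) (a : R) (hset : CanSetting R I a) :
    sInf {n : ℕ | I ^ (n + 1) = Ideal.span {a} * I ^ n} =
      sInf {n : ℕ | Kfrac R I a ^ n = Kfrac R I a ^ (n + 1)} ∧
    ∀ n : ℕ, sInf {n : ℕ | I ^ (n + 1) = Ideal.span {a} * I ^ n} ≤ n →
      Smod R I a = Kfrac R I a ^ n := by
  exact lemma22_main_aux I a hset.mem hset.nzd hset.red
end

section
/- The following hold: (1) if R is not a Gorenstein ring then K : m ⊆ K², and if moreover R is not an AGL ring then K : m ⊊ K²; (2) if ℓ_R(K²/K) = 2 then mK² + K = K : m; (3) if R is not a Gorenstein ring then μ_R(S/K) = r(R/𝔠), so R/𝔠 is a Gorenstein ring if and only if μ_R(S/K) = 1. -/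
open IsLocalRing Polynomial

set_option maxHeartbeats 1000000
set_option synthInstance.maxHeartbeats 400000

/-! ### Auxiliary machinery -/

noncomputable section AuxOrder
open Submodule Order

/-- `ℕ`-valued Krull dimension of an order. -/
noncomputable def dimnat (α : Type*) [Preorder α] : ℕ :=
  ((Order.krullDim α).unbotD 0).toNat

lemma dimnat_congr {α β : Type*} [Preorder α] [Preorder β] (e : α ≃o β) :
    dimnat α = dimnat β := by
  unfold dimnat; rw [Order.krullDim_eq_of_orderIso e]

lemma length_le_of_dimnat {α : Type*} [Preorder α] (p : LTSeries α) {n : ℕ}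
    (h : dimnat α = n) (hn : n ≠ 0) : p.length ≤ n := by
  have hle := Order.LTSeries.length_le_krullDim p
  unfold dimnat at h
  rcases hd : Order.krullDim α with _ | _ | m
  · rw [hd] at hle
    have hb : ((p.length : ℕ∞) : WithBot ℕ∞) ≤ (⊥ : WithBot ℕ∞) := by exact_mod_cast hle
    simp at hb
  · rw [hd] at h
    have e2 : (WithBot.unbotD 0 (some none : WithBot ℕ∞)).toNat = 0 := rfl
    rw [e2] at h
    omega
  · rw [hd] at h hle
    have e2 : (WithBot.unbotD 0 (some (some m) : WithBot ℕ∞)).toNat = m := rfl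
    rw [e2] at h
    subst h
    have e1 : (some (some m) : WithBot ℕ∞) = ((m : ℕ∞) : WithBot ℕ∞) := rfl
    rw [e1] at hle
    have hle2 : (p.length : ℕ∞) ≤ (m : ℕ∞) := by exact_mod_cast hle
    exact_mod_cast hle2

lemma dimnat_eq_zero_of_subsingleton {α : Type*} [Preorder α] [Subsingleton α] [Nonempty α] :
    dimnat α = 0 := by
  have h1 : Order.krullDim α = 0 :=
    le_antisymm Order.krullDim_nonpos_of_subsingleton Order.krullDim_nonneg
  unfold dimnat; rw [h1]; rfl

lemma dimnat_eq_one_of_cover {α : Type*} [PartialOrder α] {X Y : α} (hlt : X < Y)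
    (hcov : ∀ W, X ≤ W → W ≤ Y → W = X ∨ W = Y) : dimnat (Set.Icc X Y) = 1 := by
  have hdim : Order.krullDim (Set.Icc X Y) = 1 := by
    apply le_antisymm
    · refine iSup_le fun p => ?_
      suffices h : p.length ≤ 1 by exact_mod_cast h
      by_contra hc
      push_neg at hc
      have h0 : p ⟨0, by omega⟩ < p ⟨1, by omega⟩ := p.strictMono (by simp [Fin.lt_def])
      have h1 : p ⟨1, by omega⟩ < p ⟨2, by omega⟩ := p.strictMono (by simp [Fin.lt_def])
      rcases hcov (p ⟨1, by omega⟩).1 (p ⟨1, by omega⟩).2.1 (p ⟨1, by omega⟩).2.2 with hX | hY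
      · have h0' : ((p ⟨0, by omega⟩ : Set.Icc X Y) : α) < (p ⟨1, by omega⟩ : Set.Icc X Y) :=
          Subtype.coe_lt_coe.2 h0
        rw [hX] at h0'
        exact ((p ⟨0, by omega⟩).2.1).not_gt h0'
      · have h1' : ((p ⟨1, by omega⟩ : Set.Icc X Y) : α) < (p ⟨2, by omega⟩ : Set.Icc X Y) :=
          Subtype.coe_lt_coe.2 h1
        rw [hY] at h1'
        exact ((p ⟨2, by omega⟩).2.2).not_gt h1'
    · have hL := Order.LTSeries.length_le_krullDim
        (RelSeries.fromListIsChain [(⟨X, by simp [hlt.le]⟩ : Set.Icc X Y), ⟨Y, by simp [hlt.le]⟩]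
          (by simp) (by simp [List.isChain_cons_cons, Subtype.mk_lt_mk, hlt]))
      simpa [RelSeries.fromListIsChain] using hL
  unfold dimnat; rw [hdim]; rfl

section misc
variable {α β : Type*} [Preorder α] [Preorder β]

noncomputable def IccCongr (e : α ≃o β) (x y : α) : Set.Icc x y ≃o Set.Icc (e x) (e y) where
  toFun z := ⟨e z.1, ⟨e.monotone z.2.1, e.monotone z.2.2⟩⟩
  invFun w := ⟨e.symm w.1, ⟨by simpa using e.symm.monotone w.2.1,
    by simpa using e.symm.monotone w.2.2⟩⟩
  left_inv z := by ext; simp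
  right_inv w := by ext; simp
  map_rel_iff' {z z'} := by simp [Subtype.mk_le_mk, e.le_iff_le, ← Subtype.coe_le_coe]

noncomputable def IccFlatten {a b : α} (x y : Set.Icc a b) : Set.Icc x y ≃o Set.Icc x.1 y.1 where
  toFun z := ⟨z.1.1, ⟨z.2.1, z.2.2⟩⟩
  invFun w := ⟨⟨w.1, ⟨x.2.1.trans w.2.1, w.2.2.trans y.2.2⟩⟩, ⟨w.2.1, w.2.2⟩⟩
  left_inv z := rfl
  right_inv w := rfl
  map_rel_iff' {z z'} := by
    show z.1.1 ≤ z'.1.1 ↔ z ≤ z'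
    rw [← Subtype.coe_le_coe (x := z), ← Subtype.coe_le_coe (x := z.1)]

end misc

section corr
variable {R M : Type*} [CommRing R] [AddCommGroup M] [Module R M]

noncomputable def corrFwd (X Y : Submodule R M) (N : Submodule R (quotMod Y X)) :
    Submodule R M :=
  Submodule.map Y.subtype (Submodule.comap (X.comap Y.subtype).mkQ N)

lemma corrFwd_comap_map (X Y : Submodule R M) (N : Submodule R (quotMod Y X)) :
    Submodule.map (X.comap Y.subtype).mkQ (Submodule.comap Y.subtype (corrFwd X Y N)) = N := by
  rw [corrFwd, Submodule.comap_map_eq_of_injective (Submodule.injective_subtype Y),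
    Submodule.map_comap_eq_of_surjective (Submodule.mkQ_surjective _)]

lemma corrFwd_mem_Icc (X Y : Submodule R M) (hXY : X ≤ Y) (N : Submodule R (quotMod Y X)) :
    corrFwd X Y N ∈ Set.Icc X Y := by
  constructor
  · have h1 : X.comap Y.subtype ≤ Submodule.comap (X.comap Y.subtype).mkQ N := by
      intro x hx
      have : (X.comap Y.subtype).mkQ x = 0 := (Submodule.Quotient.mk_eq_zero _).2 hx
      simp [Submodule.mem_comap, this]
    calc X = Submodule.map Y.subtype (X.comap Y.subtype) := by
            rw [Submodule.map_comap_subtype, inf_eq_right.2 hXY]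
      _ ≤ _ := Submodule.map_mono h1
  · exact Submodule.map_subtype_le Y _

noncomputable def corrIso (X Y : Submodule R M) (hXY : X ≤ Y) :
    Submodule R (quotMod Y X) ≃o Set.Icc X Y where
  toFun N := ⟨corrFwd X Y N, corrFwd_mem_Icc X Y hXY N⟩
  invFun W := Submodule.map (X.comap Y.subtype).mkQ (Submodule.comap Y.subtype W.1)
  left_inv N := corrFwd_comap_map X Y N
  right_inv W := by
    ext1
    show corrFwd X Y _ = W.1
    rw [corrFwd, Submodule.comap_map_eq, Submodule.ker_mkQ, Submodule.map_sup,
      Submodule.map_comap_subtype, Submodule.map_comap_subtype,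
      inf_eq_right.2 W.2.2, inf_eq_right.2 hXY, sup_eq_left.2 W.2.1]
  map_rel_iff' {N N'} := by
    constructor
    · intro h
      have h' : corrFwd X Y N ≤ corrFwd X Y N' := h
      have h2 := Submodule.map_mono (f := (X.comap Y.subtype).mkQ)
        (Submodule.comap_mono (f := Y.subtype) h')
      rwa [corrFwd_comap_map, corrFwd_comap_map] at h2
    · intro h
      exact Submodule.map_mono (Submodule.comap_mono h)

lemma corrFwd_top (X Y : Submodule R M) : corrFwd X Y ⊤ = Y := by
  rw [corrFwd, Submodule.comap_top, Submodule.map_top, Submodule.range_subtype]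

lemma corrFwd_smul_top (X Y : Submodule R M) (hXY : X ≤ Y) (J : Ideal R) :
    corrFwd X Y (J • ⊤) = J • Y ⊔ X := by
  have h1 : (J • ⊤ : Submodule R (quotMod Y X)) =
      Submodule.map (X.comap Y.subtype).mkQ (J • ⊤) := by
    rw [Submodule.map_smul'', Submodule.map_top, Submodule.range_mkQ]
  rw [corrFwd, h1, Submodule.comap_map_eq, Submodule.ker_mkQ, Submodule.map_sup,
    Submodule.map_smul'', Submodule.map_top, Submodule.range_subtype,
    Submodule.map_comap_subtype, inf_eq_right.2 hXY]

lemma colen_eq_dimnat (X Y : Submodule R M) (hXY : X ≤ Y) :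
    colen Y X = dimnat (Set.Icc X Y) := by
  unfold colen flen dimnat
  rw [Order.krullDim_eq_of_orderIso (corrIso X Y hXY)]

lemma colen_self (Y : Submodule R M) : colen Y Y = 0 := by
  rw [colen_eq_dimnat Y Y le_rfl]
  haveI : Subsingleton (Set.Icc Y Y) :=
    ⟨fun u v => Subtype.ext ((le_antisymm u.2.2 u.2.1).trans (le_antisymm v.2.1 v.2.2))⟩
  haveI : Nonempty (Set.Icc Y Y) := ⟨⟨Y, le_rfl, le_rfl⟩⟩
  exact dimnat_eq_zero_of_subsingleton

noncomputable def quotIcc {M₀ : Type*} [AddCommGroup M₀] [Module R M₀] (N : Submodule R M₀) :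
    Submodule R (M₀ ⧸ N) ≃o Set.Icc N (⊤ : Submodule R M₀) where
  toFun P := ⟨Submodule.comap N.mkQ P, ⟨by
      intro x hx
      have : N.mkQ x = 0 := (Submodule.Quotient.mk_eq_zero _).2 hx
      simp [Submodule.mem_comap, this], le_top⟩⟩
  invFun W := Submodule.map N.mkQ W.1
  left_inv P := Submodule.map_comap_eq_of_surjective (Submodule.mkQ_surjective _) P
  right_inv W := by
    ext1
    show Submodule.comap N.mkQ (Submodule.map N.mkQ W.1) = W.1
    rw [Submodule.comap_map_eq, Submodule.ker_mkQ, sup_eq_left.2 W.2.1]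
  map_rel_iff' {P P'} := by
    constructor
    · intro h
      have h' : Submodule.comap N.mkQ P ≤ Submodule.comap N.mkQ P' := h
      have := Submodule.map_mono (f := N.mkQ) h'
      rwa [Submodule.map_comap_eq_of_surjective (Submodule.mkQ_surjective _),
        Submodule.map_comap_eq_of_surjective (Submodule.mkQ_surjective _)] at this
    · exact fun h => Submodule.comap_mono h

lemma muR_eq_dimnat {R M : Type*} [CommRing R] [IsLocalRing R] [AddCommGroup M] [Module R M]
    (X Y : Submodule R M) (hXY : X ≤ Y) :
    muR R (quotMod Y X) = dimnat (Set.Icc (IsLocalRing.maximalIdeal R • Y ⊔ X) Y) := by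
  unfold muR flen
  have e1 := quotIcc (IsLocalRing.maximalIdeal R • ⊤ : Submodule R (quotMod Y X))
  have e2 := IccCongr (corrIso X Y hXY) (IsLocalRing.maximalIdeal R • ⊤) ⊤
  have e3 := IccFlatten ((corrIso X Y hXY) (IsLocalRing.maximalIdeal R • ⊤))
    ((corrIso X Y hXY) ⊤)
  have := dimnat_congr ((e1.trans e2).trans e3)
  have hval : ((corrIso X Y hXY) (IsLocalRing.maximalIdeal R • ⊤) : Submodule R M) =
      IsLocalRing.maximalIdeal R • Y ⊔ X := corrFwd_smul_top X Y hXY _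
  have hval2 : ((corrIso X Y hXY) (⊤ : Submodule R (quotMod Y X)) : Submodule R M) = Y :=
    corrFwd_top X Y
  rw [hval, hval2] at this
  exact this

end corr
end AuxOrder

noncomputable section AuxFrac
open Submodule IsLocalRing

variable {R : Type*} [CommRing R] [IsNoetherianRing R] {I : Ideal R} {a : R}

set_option linter.unusedSectionVars false

lemma isUnit_alg (ha : a ∈ nonZeroDivisors R) :
    IsUnit (algebraMap R (FractionRing R) a) :=
  IsLocalization.map_units (FractionRing R) (⟨a, ha⟩ : nonZeroDivisors R)

lemma one_mem_K (hmem : a ∈ I) : (1 : FractionRing R) ∈ Kfrac R I a :=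
  Submodule.subset_span ⟨a, hmem, by rw [one_mul]⟩

lemma one_le_K (hmem : a ∈ I) : (1 : Submodule R (FractionRing R)) ≤ Kfrac R I a :=
  (Submodule.one_le).2 (one_mem_K hmem)

/-- `K = (1/a) • (the image of I)` as a product of submodules. -/
lemma K_eq (ha : a ∈ nonZeroDivisors R) :
    Kfrac R I a = Submodule.span R {(((isUnit_alg ha).unit⁻¹ : (FractionRing R)ˣ) :
        FractionRing R)} * Submodule.map (Algebra.linearMap R (FractionRing R)) I := by
  set u := (isUnit_alg ha).unit with hu
  have hua : (u : FractionRing R) = algebraMap R (FractionRing R) a := rfl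
  apply le_antisymm
  · rw [Kfrac, Submodule.span_le]
    rintro z ⟨x, hx, hz⟩
    have hz' : z = ((u⁻¹ : (FractionRing R)ˣ) : FractionRing R) *
        algebraMap R (FractionRing R) x := by
      calc z = z * ((u : FractionRing R) * ((u⁻¹ : (FractionRing R)ˣ) : FractionRing R)) := by
              rw [Units.mul_inv, mul_one]
        _ = (z * algebraMap R (FractionRing R) a) *
              ((u⁻¹ : (FractionRing R)ˣ) : FractionRing R) := by rw [hua]; ring
        _ = _ := by rw [hz]; ring
    rw [hz']
    exact Submodule.mul_mem_mul (Submodule.mem_span_singleton_self _)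
      (Submodule.mem_map_of_mem hx)
  · rw [Submodule.mul_le]
    rintro y hy _ ⟨x, hx, rfl⟩
    rw [Submodule.mem_span_singleton] at hy
    obtain ⟨c, rfl⟩ := hy
    have hmem : ((u⁻¹ : (FractionRing R)ˣ) : FractionRing R) *
        algebraMap R (FractionRing R) x ∈ Kfrac R I a := by
      apply Submodule.subset_span
      refine ⟨x, hx, ?_⟩
      rw [mul_assoc, mul_comm (algebraMap R (FractionRing R) x), ← hua, ← mul_assoc,
        Units.inv_mul, one_mul]
    simpa [smul_mul_assoc] using (Kfrac R I a).smul_mem c hmem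

lemma K_fg (ha : a ∈ nonZeroDivisors R) : (Kfrac R I a).FG := by
  rw [K_eq ha]
  exact Submodule.FG.mul (Submodule.fg_span_singleton _)
    (Submodule.FG.map _ (IsNoetherian.noetherian I))

lemma span_one_eq : Submodule.span R {(1 : FractionRing R)} = 1 :=
  (Submodule.one_eq_span).symm

lemma span_sing_mul_span_sing (x y : FractionRing R) :
    Submodule.span R {x} * Submodule.span R {y} = Submodule.span R {x * y} := by
  rw [Submodule.span_mul_span, Set.singleton_mul_singleton]

lemma linearMap_eq_ofId :
    Algebra.linearMap R (FractionRing R) = (Algebra.ofId R (FractionRing R)).toLinearMap := rfl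

lemma span_a_mul_K (ha : a ∈ nonZeroDivisors R) :
    Submodule.span R {algebraMap R (FractionRing R) a} * Kfrac R I a =
      Submodule.map (Algebra.linearMap R (FractionRing R)) I := by
  rw [K_eq ha, ← mul_assoc, span_sing_mul_span_sing _ _]
  have : algebraMap R (FractionRing R) a *
      (((isUnit_alg ha).unit⁻¹ : (FractionRing R)ˣ) : FractionRing R) = 1 := by
    exact (isUnit_alg ha).mul_val_inv
  rw [this, span_one_eq, one_mul]

lemma span_pow_a_mul_K_pow (ha : a ∈ nonZeroDivisors R) (j : ℕ) :
    Submodule.span R {algebraMap R (FractionRing R) (a ^ j)} * (Kfrac R I a) ^ j =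
      Submodule.map (Algebra.linearMap R (FractionRing R)) (I ^ j) := by
  have hmap : Submodule.map (Algebra.linearMap R (FractionRing R)) (I ^ j) =
      (Submodule.map (Algebra.linearMap R (FractionRing R)) I) ^ j := by
    rw [linearMap_eq_ofId]
    exact Submodule.map_pow (Algebra.ofId R (FractionRing R)) j (M := I)
  rw [hmap]
  clear hmap
  induction j with
  | zero => simp [span_one_eq]
  | succ n ih =>
      have hpow : (a : R) ^ (n+1) = a ^ n * a := by ring
      rw [hpow, map_mul, ← span_sing_mul_span_sing, pow_succ, pow_succ]
      calc Submodule.span R {algebraMap R (FractionRing R) (a^n)} *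
            Submodule.span R {algebraMap R (FractionRing R) a} *
            (Kfrac R I a ^ n * Kfrac R I a)
          = (Submodule.span R {algebraMap R (FractionRing R) (a^n)} * Kfrac R I a ^ n) *
            (Submodule.span R {algebraMap R (FractionRing R) a} * Kfrac R I a) := by ring
        _ = _ := by rw [ih, span_a_mul_K ha]

lemma span_unit_cancel_s4 {z : FractionRing R} (h : IsUnit z)
    {A B : Submodule R (FractionRing R)}
    (hAB : Submodule.span R {z} * A = Submodule.span R {z} * B) : A = B := by
  have h2 := congrArg (fun W => Submodule.span R {((h.unit⁻¹ : (FractionRing R)ˣ) :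
    FractionRing R)} * W) hAB
  simpa [← mul_assoc, span_sing_mul_span_sing, h.val_inv_mul, span_one_eq] using h2

lemma one_mem_K_pow (hmem : a ∈ I) (j : ℕ) : (1 : FractionRing R) ∈ (Kfrac R I a) ^ j := by
  induction j with
  | zero => rw [pow_zero]; exact Submodule.one_le.1 le_rfl
  | succ n ih => rw [pow_succ]; simpa using Submodule.mul_mem_mul ih (one_mem_K hmem)

lemma K_pow_mono (hmem : a ∈ I) : Monotone (fun j => (Kfrac R I a) ^ j) := by
  apply monotone_nat_of_le_succ
  intro j x hx
  rw [pow_succ]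
  simpa using Submodule.mul_mem_mul hx (one_mem_K hmem)

lemma K_pow_succ_eq (ha : a ∈ nonZeroDivisors R) {n : ℕ}
    (hred : I ^ (n + 1) = Ideal.span {a} * I ^ n) :
    (Kfrac R I a) ^ (n + 1) = (Kfrac R I a) ^ n := by
  apply span_unit_cancel_s4 (isUnit_alg (a := a ^ (n+1)) (pow_mem ha (n+1)))
  rw [span_pow_a_mul_K_pow ha (n+1), hred]
  have hmul : Submodule.map (Algebra.linearMap R (FractionRing R)) (Ideal.span {a} * I ^ n) =
      Submodule.map (Algebra.linearMap R (FractionRing R)) (Ideal.span {a}) *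
      Submodule.map (Algebra.linearMap R (FractionRing R)) (I ^ n) :=
    Submodule.map_mul _ _ (Algebra.ofId R (FractionRing R))
  rw [hmul]
  have hspan : Submodule.map (Algebra.linearMap R (FractionRing R)) (Ideal.span {a}) =
      Submodule.span R {algebraMap R (FractionRing R) a} := by
    rw [Ideal.span, Submodule.map_span]; simp
  rw [hspan, ← span_pow_a_mul_K_pow ha n, ← mul_assoc, span_sing_mul_span_sing,
    ← map_mul, ← pow_succ']

lemma K_pow_stab (ha : a ∈ nonZeroDivisors R) {n : ℕ}
    (hred : I ^ (n + 1) = Ideal.span {a} * I ^ n) (j : ℕ) :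
    (Kfrac R I a) ^ (n + j) = (Kfrac R I a) ^ n := by
  induction j with
  | zero => rfl
  | succ k ih =>
      have : n + (k + 1) = (n + k) + 1 := by ring
      rw [this, pow_succ, ih, ← pow_succ, K_pow_succ_eq ha hred]

lemma K_pow_le_stab (hmem : a ∈ I) (ha : a ∈ nonZeroDivisors R) {n : ℕ}
    (hred : I ^ (n + 1) = Ideal.span {a} * I ^ n) (j : ℕ) :
    (Kfrac R I a) ^ j ≤ (Kfrac R I a) ^ n := by
  rcases le_total j n with h | h
  · exact K_pow_mono hmem h
  · obtain ⟨k, rfl⟩ := Nat.exists_eq_add_of_le h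
    exact le_of_eq (K_pow_stab ha hred k)

lemma K_le_Smod : Kfrac R I a ≤ Smod R I a := fun x hx => Algebra.subset_adjoin hx

lemma K_pow_le_Smod (j : ℕ) : (Kfrac R I a) ^ j ≤ Smod R I a := by
  induction j with
  | zero =>
      rw [pow_zero]
      intro x hx
      rw [Submodule.one_eq_range] at hx
      obtain ⟨r, rfl⟩ := hx
      exact (Sring R I a).algebraMap_mem r
  | succ k ih =>
      rw [pow_succ, Submodule.mul_le]
      intro x hx y hy
      have hx' : x ∈ Sring R I a := (Subalgebra.mem_toSubmodule _).1 (ih hx)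
      have hy' : y ∈ Sring R I a := Algebra.subset_adjoin hy
      exact (Subalgebra.mem_toSubmodule _).2 (mul_mem hx' hy')

lemma Smod_eq_pow (hmem : a ∈ I) (ha : a ∈ nonZeroDivisors R) {n : ℕ}
    (hred : I ^ (n + 1) = Ideal.span {a} * I ^ n) :
    Smod R I a = (Kfrac R I a) ^ n := by
  apply le_antisymm
  · show Subalgebra.toSubmodule (Sring R I a) ≤ _
    rw [Sring, Algebra.adjoin_eq_span, Submodule.span_le]
    intro c hc
    induction hc using Submonoid.closure_induction with
    | mem x hx =>
        exact K_pow_le_stab hmem ha hred 1 (by simpa [pow_one] using hx)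
    | one => exact one_mem_K_pow hmem n
    | mul x y _ _ hx hy =>
        have h2 : x * y ∈ (Kfrac R I a) ^ (n + n) := by
          rw [pow_add]
          exact Submodule.mul_mem_mul hx hy
        rw [K_pow_stab ha hred n] at h2
        exact h2
  · exact K_pow_le_Smod n

lemma Smod_fg (hmem : a ∈ I) (ha : a ∈ nonZeroDivisors R) {n : ℕ}
    (hred : I ^ (n + 1) = Ideal.span {a} * I ^ n) : (Smod R I a).FG := by
  rw [Smod_eq_pow hmem ha hred]
  exact Submodule.FG.pow (K_fg ha) n

lemma div_mono_right {C A B : Submodule R (FractionRing R)} (h : A ≤ B) : C / B ≤ C / A :=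
  fun x hx y hy => hx y (h hy)

lemma div_one_eq (C : Submodule R (FractionRing R)) : C / 1 = C := by
  apply le_antisymm
  · intro x hx
    simpa using hx 1 (Submodule.one_le.1 le_rfl)
  · rw [Submodule.le_div_iff_mul_le, mul_one]

lemma le_div_div (C J : Submodule R (FractionRing R)) : J ≤ C / (C / J) :=
  fun x hx => Submodule.mem_div_iff_forall_mul_mem.2 fun y hy => by
    rw [mul_comm]; exact hy x hx

lemma fg_of_le {N P : Submodule R (FractionRing R)} (h : N ≤ P) (hP : P.FG) : N.FG := by
  haveI := isNoetherian_of_fg_of_noetherian P hP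
  have h1 : (Submodule.comap P.subtype N).FG := IsNoetherian.noetherian _
  have h2 := Submodule.FG.map P.subtype h1
  rwa [Submodule.map_comap_subtype, inf_eq_right.2 h] at h2

lemma div_span_unit (C : Submodule R (FractionRing R)) {z zi : FractionRing R}
    (hzzi : z * zi = 1) :
    C / Submodule.span R {z} = Submodule.map (LinearMap.mulLeft R zi) C := by
  ext x
  rw [Submodule.mem_div_iff_forall_mul_mem]
  constructor
  · intro hx
    refine ⟨x * z, hx z (Submodule.mem_span_singleton_self z), ?_⟩
    show zi * (x * z) = x
    calc zi * (x * z) = x * (z * zi) := by ring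
      _ = x := by rw [hzzi, mul_one]
  · rintro ⟨c, hc, rfl⟩ y hy
    rw [Submodule.mem_span_singleton] at hy
    obtain ⟨r, rfl⟩ := hy
    show (zi * c) * (r • z) ∈ C
    have heq : (zi * c) * (r • z) = r • c := by
      rw [mul_smul_comm]
      congr 1
      calc zi * c * z = (z * zi) * c := by ring
        _ = c := by rw [hzzi, one_mul]
    rw [heq]
    exact C.smul_mem r hc

lemma div_fg {C X : Submodule R (FractionRing R)} (hC : C.FG) {z : FractionRing R}
    (hz : IsUnit z) (hzX : z ∈ X) : (C / X).FG := by
  obtain ⟨zi, hzzi⟩ := hz.exists_right_inv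
  have h1 : C / X ≤ C / Submodule.span R {z} :=
    div_mono_right (Submodule.span_le.2 (Set.singleton_subset_iff.2 hzX))
  rw [div_span_unit C hzzi] at h1
  exact fg_of_le h1 (Submodule.FG.map _ hC)

lemma exists_unit_mem_div {C Y : Submodule R (FractionRing R)} (hY : Y.FG)
    (h1C : (1 : Submodule R (FractionRing R)) ≤ C) :
    ∃ s : FractionRing R, IsUnit s ∧ s ∈ C / Y := by
  obtain ⟨T, hT⟩ := hY
  obtain ⟨b, hb⟩ := IsLocalization.exist_integer_multiples_of_finset (nonZeroDivisors R)
    (T : Finset (FractionRing R))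
  refine ⟨algebraMap R (FractionRing R) b, IsLocalization.map_units _ b, ?_⟩
  rw [Submodule.mem_div_iff_forall_mul_mem, ← hT]
  intro y hy
  induction hy using Submodule.span_induction with
  | mem y hyT =>
      obtain ⟨c, hc⟩ := hb y hyT
      refine h1C ?_
      rw [Submodule.one_eq_range]
      exact ⟨c, by simpa [Algebra.smul_def] using hc⟩
  | zero => simp
  | add y z _ _ hy hz => rw [mul_add]; exact Submodule.add_mem _ hy hz
  | smul r y _ hy => rw [mul_smul_comm]; exact Submodule.smul_mem _ r hy

lemma fg_one : (1 : Submodule R (FractionRing R)).FG := by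
  rw [Submodule.one_eq_span]
  exact Submodule.fg_span_singleton _

lemma K_div_K (hcan : IsCanonicalSub R (Kfrac R I a)) :
    Kfrac R I a / Kfrac R I a = 1 := by
  have h1 : Kfrac R I a / (Kfrac R I a / 1) = 1 :=
    hcan 1 fg_one ⟨1, Submodule.one_le.1 le_rfl, isUnit_one⟩
  rwa [div_one_eq] at h1

lemma K_le_sq (hmem : a ∈ I) : Kfrac R I a ≤ Kfrac R I a ^ 2 := by
  intro x hx
  rw [pow_two]
  simpa using Submodule.mul_mem_mul hx (one_mem_K hmem)

end AuxFrac


noncomputable section AuxLocal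
open Submodule IsLocalRing

variable {R : Type*} [CommRing R] [IsLocalRing R] [IsNoetherianRing R] {I : Ideal R} {a : R}

set_option linter.unusedSectionVars false

lemma algebraMap_injective' :
    Function.Injective (algebraMap R (FractionRing R)) :=
  IsFractionRing.injective R (FractionRing R)

lemma linearMap_injective' {R : Type*} [CommRing R] [IsLocalRing R] [IsNoetherianRing R] :
    Function.Injective ⇑(Algebra.linearMap R (FractionRing R)) := fun x y h =>
  IsFractionRing.injective R (FractionRing R) h

lemma mem_mSub {x : FractionRing R} :
    x ∈ mSub R ↔ ∃ r ∈ maximalIdeal R, algebraMap R (FractionRing R) r = x := by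
  constructor
  · rintro ⟨r, hr, rfl⟩; exact ⟨r, hr, rfl⟩
  · rintro ⟨r, hr, rfl⟩; exact ⟨r, hr, rfl⟩

lemma mSub_fg : (mSub R).FG :=
  Submodule.FG.map _ (IsNoetherian.noetherian (maximalIdeal R))

lemma mSub_le_one : mSub R ≤ 1 := by
  rintro x ⟨r, _, rfl⟩
  rw [Submodule.one_eq_range]
  exact ⟨r, rfl⟩

lemma one_not_mem_mSub : (1 : FractionRing R) ∉ mSub R := by
  rintro ⟨r, hr, hr1⟩
  have : algebraMap R (FractionRing R) r = algebraMap R (FractionRing R) 1 := by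
    simpa using hr1
  have hr1' : r = 1 := algebraMap_injective' this
  subst hr1'
  exact (IsLocalRing.maximalIdeal.isMaximal R).ne_top (Ideal.eq_top_of_isUnit_mem _ hr isUnit_one)

/-- `J • N = (image of J) * N`. -/
lemma idealSmul_eq_map_mul (J : Ideal R) (N : Submodule R (FractionRing R)) :
    J • N = Submodule.map (Algebra.linearMap R (FractionRing R)) J * N := by
  apply le_antisymm
  · refine Submodule.smul_le.2 fun r hr x hx => ?_
    have : (r : R) • x = algebraMap R (FractionRing R) r * x := (Algebra.smul_def r x)
    rw [this]
    exact Submodule.mul_mem_mul (Submodule.mem_map_of_mem hr) hx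
  · rw [Submodule.mul_le]
    rintro y ⟨r, hr, rfl⟩ x hx
    have : (Algebra.linearMap R (FractionRing R)) r * x = r • x := (Algebra.smul_def r x).symm
    rw [this]
    exact Submodule.smul_mem_smul hr hx

lemma smul_le_iff_le_div (J : Ideal R) (N C : Submodule R (FractionRing R)) :
    J • N ≤ C ↔ N ≤ C / Submodule.map (Algebra.linearMap R (FractionRing R)) J := by
  rw [idealSmul_eq_map_mul, Submodule.le_div_iff_mul_le, mul_comm]

lemma m_smul_le_iff (N C : Submodule R (FractionRing R)) :
    maximalIdeal R • N ≤ C ↔ N ≤ C / mSub R :=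
  smul_le_iff_le_div (maximalIdeal R) N C

lemma m_smul_K_le (hmem : a ∈ I) : maximalIdeal R • Kfrac R I a ≤ Kfrac R I a :=
  Submodule.smul_le.2 fun r _ x hx => (Kfrac R I a).smul_mem r hx

lemma K_le_K_div_m (hmem : a ∈ I) : Kfrac R I a ≤ Kfrac R I a / mSub R :=
  (m_smul_le_iff _ _).1 (m_smul_K_le hmem)

lemma unit_of_not_mem_m {r : R} (hr : r ∉ maximalIdeal R) : IsUnit r := by
  by_contra hu
  exact hr ((IsLocalRing.mem_maximalIdeal r).2 hu)

/-- if an element of `1` is in a submodule `W` but is not in `mSub`, then `1 ∈ W`. -/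
lemma one_mem_of_unit {W : Submodule R (FractionRing R)} {x : FractionRing R}
    (hxW : x ∈ W) (hx1 : x ∈ (1 : Submodule R (FractionRing R))) (hxm : x ∉ mSub R) :
    (1 : FractionRing R) ∈ W := by
  rw [Submodule.one_eq_range] at hx1
  obtain ⟨r, rfl⟩ := hx1
  have hr : r ∉ maximalIdeal R := fun h => hxm ⟨r, h, rfl⟩
  obtain ⟨ri, hri⟩ := (unit_of_not_mem_m hr).exists_left_inv
  have : (1 : FractionRing R) = ri • (Algebra.linearMap R (FractionRing R)) r := by
    rw [Algebra.smul_def]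
    show (1 : FractionRing R) = algebraMap R (FractionRing R) ri * algebraMap R (FractionRing R) r
    rw [← map_mul, hri, map_one]
  rw [this]
  exact W.smul_mem ri hxW

/-- Main wrapper for the canonical duality. -/
lemma can_apply (hcan : IsCanonicalSub R (Kfrac R I a)) {W : Submodule R (FractionRing R)}
    (hfg : W.FG) {z : FractionRing R} (hz : IsUnit z) (hzW : z ∈ W) :
    Kfrac R I a / (Kfrac R I a / W) = W :=
  hcan W hfg ⟨z, hzW, hz⟩

/-- `K < K : m`. -/
lemma K_lt_K_div_m (hset : CanSetting R I a) (hCM : ∃ x ∈ maximalIdeal R, x ∈ nonZeroDivisors R) :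
    Kfrac R I a < Kfrac R I a / mSub R := by
  obtain ⟨x, hxm, hxnzd⟩ := hCM
  refine lt_of_le_of_ne (K_le_K_div_m hset.mem) fun heq => ?_
  have hm : Kfrac R I a / (Kfrac R I a / mSub R) = mSub R :=
    can_apply hset.canonical mSub_fg (isUnit_alg hxnzd) ⟨x, hxm, rfl⟩
  rw [← heq, K_div_K hset.canonical] at hm
  exact one_not_mem_mSub (hm ▸ Submodule.one_le.1 le_rfl)

/-- The interval `[K, K:m]` has no proper intermediate submodule. -/
lemma cover_K_div_m (hset : CanSetting R I a) (hCM : ∃ x ∈ maximalIdeal R, x ∈ nonZeroDivisors R)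
    (N : Submodule R (FractionRing R)) (hKN : Kfrac R I a ≤ N)
    (hNm : N ≤ Kfrac R I a / mSub R) :
    N = Kfrac R I a ∨ N = Kfrac R I a / mSub R := by
  obtain ⟨x, hxm, hxnzd⟩ := hCM
  have hxu : IsUnit (algebraMap R (FractionRing R) x) := isUnit_alg hxnzd
  have hxmem : algebraMap R (FractionRing R) x ∈ mSub R := ⟨x, hxm, rfl⟩
  have hcanm : Kfrac R I a / (Kfrac R I a / mSub R) = mSub R :=
    can_apply hset.canonical mSub_fg hxu hxmem
  have hKdivmfg : (Kfrac R I a / mSub R).FG := div_fg (K_fg hset.nzd) hxu hxmem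
  have hNfg : N.FG := fg_of_le hNm hKdivmfg
  have hcanN : Kfrac R I a / (Kfrac R I a / N) = N :=
    can_apply hset.canonical hNfg isUnit_one (hKN (one_mem_K hset.mem))
  have h1 : Kfrac R I a / N ≤ 1 := by
    rw [← K_div_K hset.canonical]
    exact div_mono_right hKN
  by_cases hc : Kfrac R I a / N ≤ mSub R
  · right
    have h2 : mSub R ≤ Kfrac R I a / N := by
      have h2' := div_mono_right (C := Kfrac R I a) hNm
      rwa [hcanm] at h2'
    rw [← hcanN, le_antisymm hc h2]
  · left
    obtain ⟨y, hyKN, hym⟩ := Set.not_subset.1 hc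
    have h1y : (1 : FractionRing R) ∈ Kfrac R I a / N := one_mem_of_unit hyKN (h1 hyKN) hym
    have hNK : N ≤ Kfrac R I a := fun w hw => by
      simpa using (Submodule.mem_div_iff_forall_mul_mem.1 h1y w hw)
    exact le_antisymm hNK hKN

/-- Part (1a): `K : m ≤ K²` when `K ≠ R`. -/
lemma part1a (hset : CanSetting R I a) (hne : Kfrac R I a ≠ 1) : Kfrac R I a / mSub R ≤ Kfrac R I a ^ 2 := by
  have hK2fg : (Kfrac R I a ^ 2).FG := Submodule.FG.pow (K_fg hset.nzd) 2
  have hcan2 : Kfrac R I a / (Kfrac R I a / Kfrac R I a ^ 2) = Kfrac R I a ^ 2 :=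
    can_apply hset.canonical hK2fg isUnit_one (one_mem_K_pow hset.mem 2)
  have hsub : Kfrac R I a / Kfrac R I a ^ 2 ≤ 1 := by
    rw [← K_div_K hset.canonical]
    exact div_mono_right (K_le_sq hset.mem)
  have hnotone : (1 : FractionRing R) ∉ Kfrac R I a / Kfrac R I a ^ 2 := by
    intro h1
    have hle : Kfrac R I a ^ 2 ≤ Kfrac R I a := fun y hy => by
      simpa using (Submodule.mem_div_iff_forall_mul_mem.1 h1 y hy)
    have hKle1 : Kfrac R I a ≤ 1 := by
      rw [← K_div_K hset.canonical]
      intro w hw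
      refine Submodule.mem_div_iff_forall_mul_mem.2 fun y hy => ?_
      refine hle ?_
      rw [pow_two]
      exact Submodule.mul_mem_mul hw hy
    exact hne (le_antisymm hKle1 (one_le_K hset.mem))
  have hmle : Kfrac R I a / Kfrac R I a ^ 2 ≤ mSub R := by
    intro x hx
    by_contra hxm
    exact hnotone (one_mem_of_unit hx (hsub hx) hxm)
  calc Kfrac R I a / mSub R ≤ Kfrac R I a / (Kfrac R I a / Kfrac R I a ^ 2) :=
        div_mono_right hmle
    _ = Kfrac R I a ^ 2 := hcan2

/-- Part (1b). -/
lemma part1b (hset : CanSetting R I a) (hCM : ∃ x ∈ maximalIdeal R, x ∈ nonZeroDivisors R)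
    (hne : Kfrac R I a ≠ 1) (hnAGL : ¬ IsAGLSetting R I a) :
    Kfrac R I a / mSub R < Kfrac R I a ^ 2 := by
  refine lt_of_le_of_ne (part1a hset hne) fun heq => hnAGL ?_
  obtain ⟨x, hxm, hxnzd⟩ := hCM
  have hcanm : Kfrac R I a / (Kfrac R I a / mSub R) = mSub R :=
    can_apply hset.canonical mSub_fg (isUnit_alg hxnzd) ⟨x, hxm, rfl⟩
  rw [heq] at hcanm
  -- hcanm : K / K² = mSub R
  show maximalIdeal R • Kfrac R I a ≤ 1
  rw [m_smul_le_iff]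
  intro k hk
  refine Submodule.mem_div_iff_forall_mul_mem.2 fun y hy => ?_
  rw [← K_div_K hset.canonical]
  refine Submodule.mem_div_iff_forall_mul_mem.2 fun w hw => ?_
  have hyK2 : ∀ v ∈ Kfrac R I a ^ 2, y * v ∈ Kfrac R I a := by
    rw [← hcanm] at hy
    exact Submodule.mem_div_iff_forall_mul_mem.1 hy
  have : k * y * w = y * (k * w) := by ring
  rw [this]
  refine hyK2 _ ?_
  rw [pow_two]
  exact Submodule.mul_mem_mul hk hw

end AuxLocal


noncomputable section AuxDual
open Submodule IsLocalRing

variable {R : Type*} [CommRing R] [IsLocalRing R] [IsNoetherianRing R] {I : Ideal R} {a : R}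

set_option linter.unusedSectionVars false

/-- The canonical duality induces an antitone isomorphism of intervals. -/
noncomputable def dualIcc (hset : CanSetting R I a)
    {X Y : Submodule R (FractionRing R)} (hXY : X ≤ Y) (hYfg : Y.FG)
    {z : FractionRing R} (hzu : IsUnit z) (hzX : z ∈ X) :
    Set.Icc X Y ≃o (Set.Icc (Kfrac R I a / Y) (Kfrac R I a / X))ᵒᵈ where
  toFun W := OrderDual.toDual ⟨Kfrac R I a / W.1, ⟨div_mono_right W.2.2, div_mono_right W.2.1⟩⟩
  invFun W' := ⟨Kfrac R I a / (OrderDual.ofDual W').1,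
    ⟨by
      have h := div_mono_right (C := Kfrac R I a) (OrderDual.ofDual W').2.2
      rwa [can_apply hset.canonical (fg_of_le hXY hYfg) hzu hzX] at h,
     by
      have h := div_mono_right (C := Kfrac R I a) (OrderDual.ofDual W').2.1
      rwa [can_apply hset.canonical hYfg hzu (hXY hzX)] at h⟩⟩
  left_inv W := Subtype.ext
    (can_apply hset.canonical (fg_of_le W.2.2 hYfg) hzu (W.2.1 hzX))
  right_inv W' := by
    have hs := exists_unit_mem_div (C := Kfrac R I a) hYfg (one_le_K hset.mem)
    obtain ⟨s, hsu, hs⟩ := hs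
    have hfg : (OrderDual.ofDual W').1.FG :=
      fg_of_le (OrderDual.ofDual W').2.2 (div_fg (K_fg hset.nzd) hzu hzX)
    exact OrderDual.toDual.injective (Subtype.ext
      (can_apply hset.canonical hfg hsu ((OrderDual.ofDual W').2.1 hs)))
  map_rel_iff' {W V} := by
    constructor
    · intro h
      have h' : Kfrac R I a / V.1 ≤ Kfrac R I a / W.1 := h
      have h2 := div_mono_right (C := Kfrac R I a) h'
      rw [can_apply hset.canonical (fg_of_le W.2.2 hYfg) hzu (W.2.1 hzX),
        can_apply hset.canonical (fg_of_le V.2.2 hYfg) hzu (V.2.1 hzX)] at h2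
      exact h2
    · intro h
      exact div_mono_right h

lemma dual_dimnat (hset : CanSetting R I a)
    {X Y : Submodule R (FractionRing R)} (hXY : X ≤ Y) (hYfg : Y.FG)
    {z : FractionRing R} (hzu : IsUnit z) (hzX : z ∈ X) :
    dimnat (Set.Icc X Y) = dimnat (Set.Icc (Kfrac R I a / Y) (Kfrac R I a / X)) := by
  unfold dimnat
  rw [Order.krullDim_eq_of_orderIso (dualIcc hset hXY hYfg hzu hzX), Order.krullDim_orderDual]

end AuxDual


noncomputable section AuxFinal
open Submodule IsLocalRing

variable {R : Type*} [CommRing R] [IsLocalRing R] [IsNoetherianRing R] {I : Ideal R} {a : R}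

set_option linter.unusedSectionVars false

lemma part2 (hset : CanSetting R I a) (hCM : ∃ x ∈ maximalIdeal R, x ∈ nonZeroDivisors R)
    (h2 : colen (Kfrac R I a ^ 2) (Kfrac R I a) = 2) :
    maximalIdeal R • (Kfrac R I a ^ 2) ⊔ Kfrac R I a = Kfrac R I a / mSub R := by
  have hK2 : Kfrac R I a ≤ Kfrac R I a ^ 2 := K_le_sq hset.mem
  have hKne2 : Kfrac R I a ≠ Kfrac R I a ^ 2 := by
    intro h
    rw [← h, colen_self] at h2
    omega
  have hjac : maximalIdeal R ≤ (⊥ : Ideal R).jacobson := by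
    rw [IsLocalRing.jacobson_eq_maximalIdeal ⊥ bot_ne_top]
  have hK2fg : (Kfrac R I a ^ 2).FG := Submodule.FG.pow (K_fg hset.nzd) 2
  have hmK2fg : (maximalIdeal R • Kfrac R I a ^ 2).FG := by
    rw [idealSmul_eq_map_mul]
    exact Submodule.FG.mul (Submodule.FG.map _ (IsNoetherian.noetherian _)) hK2fg
  have hm1 : ¬ (maximalIdeal R • Kfrac R I a ^ 2 ≤ Kfrac R I a) := by
    intro hc
    have hc' : Kfrac R I a ^ 2 ≤ Kfrac R I a / mSub R := (m_smul_le_iff _ _).1 hc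
    rcases cover_K_div_m hset hCM (Kfrac R I a ^ 2) hK2 hc' with h | h
    · exact hKne2 h.symm
    · rw [h, colen_eq_dimnat _ _ (K_le_K_div_m hset.mem),
        dimnat_eq_one_of_cover (K_lt_K_div_m hset hCM) (cover_K_div_m hset hCM)] at h2
      omega
  have dim2 : dimnat (Set.Icc (Kfrac R I a) (Kfrac R I a ^ 2)) = 2 := by
    rw [← colen_eq_dimnat _ _ hK2]
    exact h2
  have hm2 : maximalIdeal R • (maximalIdeal R • Kfrac R I a ^ 2) ≤ Kfrac R I a := by
    by_contra hc
    have hlt1 : Kfrac R I a < Kfrac R I a ⊔ maximalIdeal R • (maximalIdeal R • Kfrac R I a ^ 2) := by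
      refine lt_of_le_of_ne le_sup_left fun h => hc ?_
      exact le_sup_right.trans h.symm.le
    have hle21 : Kfrac R I a ⊔ maximalIdeal R • (maximalIdeal R • Kfrac R I a ^ 2) ≤
        Kfrac R I a ⊔ maximalIdeal R • Kfrac R I a ^ 2 :=
      sup_le_sup_left (Submodule.smul_mono le_rfl Submodule.smul_le_right) _
    have hlt2 : Kfrac R I a ⊔ maximalIdeal R • (maximalIdeal R • Kfrac R I a ^ 2) <
        Kfrac R I a ⊔ maximalIdeal R • Kfrac R I a ^ 2 := by
      refine lt_of_le_of_ne hle21 fun h => ?_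
      have hNN : maximalIdeal R • Kfrac R I a ^ 2 ≤
          Kfrac R I a ⊔ maximalIdeal R • (maximalIdeal R • Kfrac R I a ^ 2) :=
        le_sup_right.trans h.symm.le
      exact hc (Submodule.smul_le_of_le_smul_of_le_jacobson_bot hmK2fg hjac hNN)
    have hlt3 : Kfrac R I a ⊔ maximalIdeal R • Kfrac R I a ^ 2 < Kfrac R I a ^ 2 := by
      refine lt_of_le_of_ne (sup_le hK2 Submodule.smul_le_right) fun h => ?_
      have hNN : Kfrac R I a ^ 2 ≤ Kfrac R I a ⊔ maximalIdeal R • Kfrac R I a ^ 2 := h.symm.le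
      exact hm1 (Submodule.smul_le_of_le_smul_of_le_jacobson_bot hK2fg hjac hNN)
    have hchain := length_le_of_dimnat
      (RelSeries.fromListIsChain
        [(⟨Kfrac R I a, ⟨le_rfl, hK2⟩⟩ : Set.Icc (Kfrac R I a) (Kfrac R I a ^ 2)),
         ⟨Kfrac R I a ⊔ maximalIdeal R • (maximalIdeal R • Kfrac R I a ^ 2),
           ⟨le_sup_left, sup_le hK2 (Submodule.smul_le_right.trans
             (Submodule.smul_le_right))⟩⟩,
         ⟨Kfrac R I a ⊔ maximalIdeal R • Kfrac R I a ^ 2,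
           ⟨le_sup_left, sup_le hK2 Submodule.smul_le_right⟩⟩,
         ⟨Kfrac R I a ^ 2, ⟨hK2, le_rfl⟩⟩] (by simp)
        (by
          simp only [List.isChain_cons_cons, List.isChain_singleton, and_true]
          exact ⟨hlt1, hlt2, hlt3⟩))
      dim2 (by omega)
    simp [RelSeries.fromListIsChain] at hchain
  have hA1m : maximalIdeal R • (maximalIdeal R • Kfrac R I a ^ 2 ⊔ Kfrac R I a) ≤
      Kfrac R I a := by
    rw [Submodule.smul_sup]
    exact sup_le hm2 (m_smul_K_le hset.mem)
  have hA1 : maximalIdeal R • Kfrac R I a ^ 2 ⊔ Kfrac R I a ≤ Kfrac R I a / mSub R :=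
    (m_smul_le_iff _ _).1 hA1m
  rcases cover_K_div_m hset hCM _ le_sup_right hA1 with h | h
  · exact absurd (le_sup_left.trans h.le) hm1
  · exact h

lemma one_mem_S (hset : CanSetting R I a) : (1 : FractionRing R) ∈ Smod R I a :=
  K_le_Smod (one_mem_K hset.mem)

lemma condS_eq (hset : CanSetting R I a) : condS R I a = Kfrac R I a / Smod R I a := by
  apply le_antisymm
  · intro x hx
    exact Submodule.mem_div_iff_forall_mul_mem.2 fun s hs =>
      (one_le_K hset.mem) (Submodule.mem_div_iff_forall_mul_mem.1 hx s hs)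
  · intro x hx
    refine Submodule.mem_div_iff_forall_mul_mem.2 fun s hs => ?_
    rw [← K_div_K hset.canonical]
    refine Submodule.mem_div_iff_forall_mul_mem.2 fun k hk => ?_
    have hsk : s * k ∈ Smod R I a :=
      (Subalgebra.mem_toSubmodule _).2
        (mul_mem ((Subalgebra.mem_toSubmodule _).1 hs)
          ((Subalgebra.mem_toSubmodule _).1 (K_le_Smod hk)))
    have heq : x * s * k = x * (s * k) := mul_assoc _ _ _
    rw [heq]
    exact Submodule.mem_div_iff_forall_mul_mem.1 hx _ hsk

lemma cSub_eq (hset : CanSetting R I a) :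
    Submodule.map (Algebra.linearMap R (FractionRing R)) (condIdeal R I a) = condS R I a := by
  have hle1 : condS R I a ≤ 1 := by
    intro x hx
    have := Submodule.mem_div_iff_forall_mul_mem.1 hx 1
      ((Subalgebra.mem_toSubmodule _).2 (one_mem (Sring R I a)))
    simpa using this
  rw [condIdeal, Submodule.map_comap_eq, ← Submodule.one_eq_range, inf_eq_right.2 hle1]

lemma c_le_colon : condIdeal R I a ≤ Submodule.colon (condIdeal R I a) (maximalIdeal R) := by
  intro r hr
  rw [Submodule.mem_colon]
  intro p hp
  rw [smul_eq_mul]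
  exact Ideal.mul_mem_right p _ hr

lemma colon_map_eq (hset : CanSetting R I a) :
    Submodule.map (Algebra.linearMap R (FractionRing R))
        (Submodule.colon (condIdeal R I a) (maximalIdeal R)) =
      Kfrac R I a / (maximalIdeal R • Smod R I a ⊔ Kfrac R I a) := by
  apply le_antisymm
  · rintro x ⟨r, hr, rfl⟩
    refine Submodule.mem_div_iff_forall_mul_mem.2 fun y hy => ?_
    obtain ⟨y1, hy1, y2, hy2, rfl⟩ := Submodule.mem_sup.1 hy
    rw [mul_add]
    apply Submodule.add_mem
    · refine Submodule.smul_induction_on hy1 ?_ ?_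
      · intro p hp s hs
        have heq : (Algebra.linearMap R (FractionRing R)) r * (p • s) =
            algebraMap R (FractionRing R) (r * p) * s := by
          rw [map_mul, Algebra.smul_def]
          show algebraMap R (FractionRing R) r * (algebraMap R (FractionRing R) p * s) = _
          ring
        rw [heq]
        have hrp : r * p ∈ condIdeal R I a := by
          have h := Submodule.mem_colon.1 hr p hp
          rwa [smul_eq_mul] at h
        have hrp' : algebraMap R (FractionRing R) (r * p) ∈ condS R I a := hrp
        rw [condS_eq hset] at hrp'
        exact Submodule.mem_div_iff_forall_mul_mem.1 hrp' s hs
      · intro u v hu hv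
        rw [mul_add]
        exact Submodule.add_mem _ hu hv
    · have heq : (Algebra.linearMap R (FractionRing R)) r * y2 = r • y2 :=
        (Algebra.smul_def r y2).symm
      rw [heq]
      exact (Kfrac R I a).smul_mem r hy2
  · intro x hx
    have hx1 : x ∈ (1 : Submodule R (FractionRing R)) := by
      rw [← K_div_K hset.canonical]
      exact div_mono_right le_sup_right hx
    rw [Submodule.one_eq_range] at hx1
    obtain ⟨r, rfl⟩ := hx1
    refine Submodule.mem_map_of_mem ?_
    rw [Submodule.mem_colon]
    intro p hp
    show r * p ∈ condIdeal R I a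
    show algebraMap R (FractionRing R) (r * p) ∈ condS R I a
    rw [condS_eq hset]
    refine Submodule.mem_div_iff_forall_mul_mem.2 fun s hs => ?_
    have hps : p • s ∈ maximalIdeal R • Smod R I a := Submodule.smul_mem_smul hp hs
    have heq : algebraMap R (FractionRing R) (r * p) * s =
        (Algebra.linearMap R (FractionRing R)) r * (p • s) := by
      rw [map_mul, Algebra.smul_def]
      show _ = algebraMap R (FractionRing R) r * (algebraMap R (FractionRing R) p * s)
      ring
    rw [heq]
    exact Submodule.mem_div_iff_forall_mul_mem.1 hx _ (Submodule.mem_sup_left hps)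

noncomputable def idealIcc (c d : Ideal R) : Set.Icc c d ≃o
    Set.Icc (Submodule.map (Algebra.linearMap R (FractionRing R)) c)
      (Submodule.map (Algebra.linearMap R (FractionRing R)) d) where
  toFun J := ⟨Submodule.map _ J.1, ⟨Submodule.map_mono J.2.1, Submodule.map_mono J.2.2⟩⟩
  invFun W := ⟨Submodule.comap (Algebra.linearMap R (FractionRing R)) W.1,
    ⟨by
      have h1 : c = Submodule.comap (Algebra.linearMap R (FractionRing R))
          (Submodule.map (Algebra.linearMap R (FractionRing R)) c) :=
        (Submodule.comap_map_eq_of_injective linearMap_injective' c).symm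
      exact le_trans (le_of_eq h1) (Submodule.comap_mono W.2.1),
     by
      have h1 : Submodule.comap (Algebra.linearMap R (FractionRing R))
          (Submodule.map (Algebra.linearMap R (FractionRing R)) d) = d :=
        Submodule.comap_map_eq_of_injective linearMap_injective' d
      exact le_trans (Submodule.comap_mono W.2.2) (le_of_eq h1)⟩⟩
  left_inv J := Subtype.ext (Submodule.comap_map_eq_of_injective linearMap_injective' J.1)
  right_inv W := by
    refine Subtype.ext ?_
    show Submodule.map _ (Submodule.comap _ W.1) = W.1
    rw [Submodule.map_comap_eq]
    refine inf_eq_right.2 (W.2.2.trans ?_)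
    rintro y ⟨t, _, rfl⟩
    exact LinearMap.mem_range_self _ t
  map_rel_iff' {J J'} := by
    constructor
    · intro h
      have h' : Submodule.map (Algebra.linearMap R (FractionRing R)) J.1 ≤
          Submodule.map (Algebra.linearMap R (FractionRing R)) J'.1 := h
      have h2 := Submodule.comap_mono (f := Algebra.linearMap R (FractionRing R)) h'
      rwa [Submodule.comap_map_eq_of_injective linearMap_injective',
        Submodule.comap_map_eq_of_injective linearMap_injective'] at h2
    · intro h
      exact Submodule.map_mono h

lemma part3eq (hset : CanSetting R I a) :
    muR R (quotMod (Smod R I a) (Kfrac R I a)) =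
      colen (Submodule.colon (condIdeal R I a) (maximalIdeal R)) (condIdeal R I a) := by
  obtain ⟨n, hred⟩ := hset.red
  have hSfg : (Smod R I a).FG := Smod_fg hset.mem hset.nzd hred
  have hKS : Kfrac R I a ≤ Smod R I a := K_le_Smod
  have hXY : maximalIdeal R • Smod R I a ⊔ Kfrac R I a ≤ Smod R I a :=
    sup_le Submodule.smul_le_right hKS
  have step1 : muR R (quotMod (Smod R I a) (Kfrac R I a)) =
      dimnat (Set.Icc (maximalIdeal R • Smod R I a ⊔ Kfrac R I a) (Smod R I a)) :=
    muR_eq_dimnat (Kfrac R I a) (Smod R I a) hKS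
  have step2 := dual_dimnat hset hXY hSfg isUnit_one
    (le_sup_right (a := maximalIdeal R • Smod R I a) (one_mem_K hset.mem))
  have step3 : Kfrac R I a / Smod R I a =
      Submodule.map (Algebra.linearMap R (FractionRing R)) (condIdeal R I a) := by
    rw [cSub_eq hset, condS_eq hset]
  have step4 := colon_map_eq hset
  have step5 := dimnat_congr (idealIcc (condIdeal R I a)
    (Submodule.colon (condIdeal R I a) (maximalIdeal R)) (R := R))
  have step6 : colen (Submodule.colon (condIdeal R I a) (maximalIdeal R)) (condIdeal R I a) =
      dimnat (Set.Icc (condIdeal R I a) (Submodule.colon (condIdeal R I a) (maximalIdeal R))) :=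
    colen_eq_dimnat _ _ c_le_colon
  rw [step1, step2, step3, ← step4, step6, step5]

end AuxFinal

/-- **Corollary 2.5.** (1) If `R` is not Gorenstein then `K : m ⊆ K²`, and if moreover `R` is
not an AGL ring then `K : m ⊊ K²`; (2) if `ℓ_R(K²/K) = 2` then `mK² + K = K : m`;
(3) if `R` is not Gorenstein then `μ_R(S/K) = r(R/𝔠)`, hence `R/𝔠` is Gorenstein iff
`μ_R(S/K) = 1`. -/
theorem corollary_two_five (R : Type*) [CommRing R] [IsLocalRing R] [IsNoetherianRing R]
    (hdim : ringKrullDim R = 1)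
    (hCM : ∃ x ∈ maximalIdeal R, x ∈ nonZeroDivisors R)
    (I : Ideal R) (a : R) (hset : CanSetting R I a) :
    (Kfrac R I a ≠ 1 → Kfrac R I a / mSub R ≤ Kfrac R I a ^ 2) ∧
    (Kfrac R I a ≠ 1 → ¬ IsAGLSetting R I a →
      Kfrac R I a / mSub R < Kfrac R I a ^ 2) ∧
    (colen (Kfrac R I a ^ 2) (Kfrac R I a) = 2 →
      maximalIdeal R • (Kfrac R I a ^ 2) ⊔ Kfrac R I a = Kfrac R I a / mSub R) ∧
    (Kfrac R I a ≠ 1 →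
      muR R (quotMod (Smod R I a) (Kfrac R I a)) =
        colen (Submodule.colon (condIdeal R I a) (maximalIdeal R)) (condIdeal R I a) ∧
      (colen (Submodule.colon (condIdeal R I a) (maximalIdeal R)) (condIdeal R I a) = 1 ↔
        muR R (quotMod (Smod R I a) (Kfrac R I a)) = 1)) := by
  refine ⟨fun hne => part1a hset hne, fun hne hnAGL => part1b hset hCM hne hnAGL,
    fun h2 => part2 hset hCM h2, fun hne => ?_⟩
  have heq := part3eq hset
  exact ⟨heq, by rw [heq]⟩
end
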